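/- Let α_2, α_r > 0 and let H be a {1,2,r}-graph such that both the order of its maximum complete {1,2,r}-subgraph and the number of vertices covered by H^2 equal t, where t ≥ α_r/(α_2 (r-2)!) + 1. Then max over the standard simplex of L(H,x) = Σ_{i ∈ E(H^1)} x_i + α_2 Σ_{ij ∈ E(H^2)} x_i x_j + α_r Σ_{e ∈ E(H^r)} Π_{i∈e} x_i equals 1 + α_2 (t-1)/(2t) + α_r Π_{i=1}^{r-1}(t-i)/(r! t^{r-1}). -/

import Mathlib

open Finset

/-- tangent line inequality: `s^k - c^k ≥ k c^(k-1) (s-c)` for nonneg reals. -/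
lemma tangentT : ∀ (k : ℕ) (s c : ℝ), 0 ≤ s → 0 ≤ c →
    (k : ℝ) * c ^ (k - 1) * (s - c) ≤ s ^ k - c ^ k := by
  intro k
  induction k with
  | zero => intro s c _ _; simp
  | succ j IH =>
    intro s c hs hc
    cases j with
    | zero => simp
    | succ i =>
      have IH' := IH s c hs hc
      have h1 : s * ((i + 1 : ℝ) * c ^ i * (s - c)) ≤ s * (s ^ (i+1) - c ^ (i+1)) := by
        apply mul_le_mul_of_nonneg_left _ hs
        simpa using IH'
      have h2 : 0 ≤ (i + 1 : ℝ) * c ^ i * (s - c) ^ 2 :=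
        mul_nonneg (mul_nonneg (by positivity) (by positivity)) (sq_nonneg _)
      have split : s ^ (i+1+1) - c ^ (i+1+1)
          = s * (s ^ (i+1) - c ^ (i+1)) + c ^ (i+1) * (s - c) := by ring
      have key : s * ((i + 1 : ℝ) * c ^ i * (s - c)) + c ^ (i+1) * (s - c)
            - ((i : ℝ) + 1 + 1) * c ^ (i+1) * (s - c)
          = (i + 1 : ℝ) * c ^ i * (s - c) ^ 2 := by ring
      push_cast
      linarith [h1, h2, split, key]

/-- weighted AM-GM: `(j+1) σ c^j ≤ σ^(j+1) + j c^(j+1)`. -/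
lemma amgm (j : ℕ) (σ c : ℝ) (hσ : 0 ≤ σ) (hc : 0 ≤ c) :
    ((j : ℝ) + 1) * σ * c ^ j ≤ σ ^ (j+1) + (j : ℝ) * c ^ (j+1) := by
  have h := tangentT (j+1) σ c hσ hc
  simp only [Nat.add_sub_cancel] at h
  push_cast at h
  have e : ((j : ℝ) + 1) * c ^ j * (σ - c)
      = ((j : ℝ) + 1) * σ * c ^ j - (j : ℝ) * c ^ (j+1) - c ^ (j+1) := by ring
  linarith [h, e]

/-- key one-variable step for Maclaurin induction. -/
lemma keystep (j : ℕ) (τ s a : ℝ) (hτ : 1 ≤ τ) (hs : 0 ≤ s) (ha : 0 ≤ a) :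
    (τ + 1) ^ j * ((τ - (j : ℝ)) * s ^ (j+1) + ((j : ℝ) + 1) * τ * a * s ^ j)
      ≤ (s + a) ^ (j+1) * τ ^ (j+1) := by
  have hτ0 : (0:ℝ) < τ := lt_of_lt_of_le one_pos hτ
  set c : ℝ := (τ + 1) * s / τ with hcdef
  have hc : 0 ≤ c := by positivity
  have hceq : c * τ = (τ + 1) * s := by rw [hcdef, div_mul_cancel₀ _ (ne_of_gt hτ0)]
  have AM := amgm j (s + a) c (by linarith) hc
  have e1 : c ^ j * τ ^ j = (τ + 1) ^ j * s ^ j := by rw [← mul_pow, hceq, mul_pow]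
  have e2 : c ^ (j+1) * τ ^ (j+1) = (τ + 1) ^ (j+1) * s ^ (j+1) := by
    rw [← mul_pow, hceq, mul_pow]
  have hid : (τ + 1) ^ j * ((τ - (j : ℝ)) * s ^ (j+1) + ((j : ℝ) + 1) * τ * a * s ^ j)
      = τ ^ (j+1) * (((j : ℝ) + 1) * (s + a) * c ^ j - (j : ℝ) * c ^ (j+1)) := by
    linear_combination (-(((j : ℝ) + 1) * (s + a) * τ)) * e1 + (j : ℝ) * e2
  rw [hid]
  have hXX : ((j : ℝ) + 1) * (s + a) * c ^ j - (j : ℝ) * c ^ (j+1) ≤ (s + a) ^ (j+1) := by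
    linarith [AM]
  calc τ ^ (j+1) * (((j : ℝ) + 1) * (s + a) * c ^ j - (j : ℝ) * c ^ (j+1))
      ≤ τ ^ (j+1) * (s + a) ^ (j+1) :=
        mul_le_mul_of_nonneg_left hXX (le_of_lt (pow_pos hτ0 _))
    _ = (s + a) ^ (j+1) * τ ^ (j+1) := by ring

lemma maclaurin {ι : Type*} [DecidableEq ι] (x : ι → ℝ) :
    ∀ S : Finset ι, (∀ i ∈ S, 0 ≤ x i) → ∀ k : ℕ,
      (S.card : ℝ) ^ k * ∑ A ∈ S.powersetCard k, ∏ i ∈ A, x i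
        ≤ (S.card.choose k : ℝ) * (∑ i ∈ S, x i) ^ k := by
  intro S
  induction S using Finset.induction_on with
  | empty =>
    intro _ k
    cases k with
    | zero => simp
    | succ j => simp
  | @insert a S haS IH =>
    intro hx k
    have hxa : 0 ≤ x a := hx a (mem_insert_self a S)
    have hxS : ∀ i ∈ S, 0 ≤ x i := fun i hi => hx i (mem_insert_of_mem hi)
    have IH' := IH hxS
    have hcard : (insert a S).card = S.card + 1 := card_insert_of_notMem haS
    have hsum : ∑ i ∈ insert a S, x i = x a + ∑ i ∈ S, x i := sum_insert haS
    cases k with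
    | zero => simp
    | succ j =>
      have hdisj : Disjoint (S.powersetCard (j+1)) ((S.powersetCard j).image (insert a)) := by
        rw [Finset.disjoint_left]
        intro A hA hA'
        obtain ⟨B, hB, rfl⟩ := Finset.mem_image.mp hA'
        have hAsub : insert a B ⊆ S := (Finset.mem_powersetCard.mp hA).1
        exact haS (hAsub (mem_insert_self a B))
      have hinj : ∀ B ∈ S.powersetCard j, ∀ B' ∈ S.powersetCard j,
          insert a B = insert a B' → B = B' := by
        intro B hB B' hB' hBB
        have haB : a ∉ B := fun h => haS ((Finset.mem_powersetCard.mp hB).1 h)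
        have haB' : a ∉ B' := fun h => haS ((Finset.mem_powersetCard.mp hB').1 h)
        rw [← Finset.erase_insert haB, ← Finset.erase_insert haB', hBB]
      have hdec : ∑ A ∈ (insert a S).powersetCard (j+1), ∏ i ∈ A, x i
          = (∑ A ∈ S.powersetCard (j+1), ∏ i ∈ A, x i)
            + x a * ∑ B ∈ S.powersetCard j, ∏ i ∈ B, x i := by
        rw [Finset.powersetCard_succ_insert haS, Finset.sum_union hdisj,
          Finset.sum_image hinj, Finset.mul_sum]
        congr 1
        refine Finset.sum_congr rfl fun B hB => ?_
        have haB : a ∉ B := fun h => haS ((Finset.mem_powersetCard.mp hB).1 h)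
        rw [Finset.prod_insert haB]
      rcases Finset.eq_empty_or_nonempty S with rfl | hne
      · cases j with
        | zero =>
          have h1 : (Finset.powersetCard 1 (∅ : Finset ι)) = ∅ :=
            Finset.powersetCard_eq_empty.mpr (by simp)
          simp only [hdec]
          simp [hcard, hsum, h1]
        | succ i =>
          rw [hdec]
          have h1 : (Finset.powersetCard (i+1+1) (∅ : Finset ι)) = ∅ :=
            Finset.powersetCard_eq_empty.mpr (by simp)
          have h2 : (Finset.powersetCard (i+1) (∅ : Finset ι)) = ∅ :=
            Finset.powersetCard_eq_empty.mpr (by simp)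
          have h3 : Nat.choose (#(insert a (∅:Finset ι))) (i+1+1) = 0 := by
            apply Nat.choose_eq_zero_of_lt
            simp
          rw [h1, h2, h3]
          simp
      rw [hdec, hcard, hsum]
      set E1 := ∑ A ∈ S.powersetCard (j+1), ∏ i ∈ A, x i with hE1def
      set E0 := ∑ B ∈ S.powersetCard j, ∏ i ∈ B, x i with hE0def
      set s := ∑ i ∈ S, x i with hsdef
      have hs : 0 ≤ s := Finset.sum_nonneg hxS
      have hE1 : 0 ≤ E1 := Finset.sum_nonneg fun A hA =>
        Finset.prod_nonneg fun i hi => hxS i ((Finset.mem_powersetCard.mp hA).1 hi)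
      have hE0 : 0 ≤ E0 := Finset.sum_nonneg fun A hA =>
        Finset.prod_nonneg fun i hi => hxS i ((Finset.mem_powersetCard.mp hA).1 hi)
      have hpos : 0 < S.card := Finset.card_pos.mpr hne
      · set m := S.card with hmdef
        have hm1 : (1:ℝ) ≤ (m:ℝ) := by exact_mod_cast hpos
        have hm0 : (0:ℝ) < (m:ℝ) := by linarith
        have IH1 : (m:ℝ)^(j+1) * E1 ≤ (m.choose (j+1) : ℝ) * s^(j+1) := IH' (j+1)
        have IH0 : (m:ℝ)^j * E0 ≤ (m.choose j : ℝ) * s^j := IH' j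
        have id2 : ((m:ℝ)+1) * (m.choose j : ℝ) = ((m+1).choose (j+1) : ℝ) * ((j:ℝ)+1) := by
          exact_mod_cast Nat.add_one_mul_choose_eq m j
        have pascal : (((m+1).choose (j+1) : ℕ) : ℝ)
            = (m.choose j : ℝ) + (m.choose (j+1) : ℝ) := by
          exact_mod_cast Nat.choose_succ_succ (m) (j)
        have id1 : ((m:ℝ)+1) * (m.choose (j+1) : ℝ)
            = ((m+1).choose (j+1) : ℝ) * ((m:ℝ)-(j:ℝ)) := by nlinarith [id2, pascal]
        have hkey := keystep j (m:ℝ) s (x a) hm1 hs hxa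
        have hCpos : (0:ℝ) ≤ ((m+1).choose (j+1) : ℝ) := by positivity
        have H : (((m:ℕ)+1:ℕ):ℝ) ^ (j+1) * (E1 + x a * E0) * (m:ℝ)^(j+1)
            ≤ (((m+1).choose (j+1) : ℕ):ℝ) * (x a + s) ^ (j+1) * (m:ℝ)^(j+1) := by
          push_cast
          calc ((m:ℝ)+1) ^ (j+1) * (E1 + x a * E0) * (m:ℝ)^(j+1)
              = ((m:ℝ)+1)^(j+1) * ((m:ℝ)^(j+1) * E1)
                + (((m:ℝ)+1)^(j+1) * (x a * (m:ℝ))) * ((m:ℝ)^j * E0) := by ring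
            _ ≤ ((m:ℝ)+1)^(j+1) * ((m.choose (j+1) : ℝ) * s^(j+1))
                + (((m:ℝ)+1)^(j+1) * (x a * (m:ℝ))) * ((m.choose j : ℝ) * s^j) := by
                gcongr <;> positivity
            _ = ((m+1).choose (j+1) : ℝ) *
                  (((m:ℝ)+1)^j * (((m:ℝ)-(j:ℝ)) * s^(j+1) + ((j:ℝ)+1)*(m:ℝ)*(x a)*s^j)) := by
                linear_combination (((m:ℝ)+1)^j * s^(j+1)) * id1
                  + (((m:ℝ)+1)^j * (x a) * (m:ℝ) * s^j) * id2
            _ ≤ ((m+1).choose (j+1) : ℝ) * ((s + x a) ^ (j+1) * (m:ℝ)^(j+1)) :=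
                mul_le_mul_of_nonneg_left hkey hCpos
            _ = ((m+1).choose (j+1) : ℝ) * (x a + s) ^ (j+1) * (m:ℝ)^(j+1) := by ring
        have := le_of_mul_le_mul_right (by linarith [H] :
          (((m:ℕ)+1:ℕ):ℝ) ^ (j+1) * (E1 + x a * E0) * (m:ℝ)^(j+1)
            ≤ (((m+1).choose (j+1) : ℕ):ℝ) * (x a + s) ^ (j+1) * (m:ℝ)^(j+1))
          (pow_pos hm0 (j+1))
        exact_mod_cast this

lemma esymm_le {ι : Type*} [DecidableEq ι] (x : ι → ℝ) (S : Finset ι)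
    (hx : ∀ i ∈ S, 0 ≤ x i) (m : ℕ) :
    (m.factorial : ℝ) * ∑ A ∈ S.powersetCard m, ∏ i ∈ A, x i ≤ (∑ i ∈ S, x i) ^ m := by
  rcases Nat.eq_zero_or_pos S.card with h0 | hpos
  · have hSempty : S = ∅ := Finset.card_eq_zero.mp h0
    subst hSempty
    cases m with
    | zero => simp
    | succ j =>
      rw [Finset.powersetCard_eq_empty.mpr (by simp)]
      simp
  · have hM := maclaurin x S hx m
    have hE : 0 ≤ ∑ A ∈ S.powersetCard m, ∏ i ∈ A, x i := Finset.sum_nonneg fun A hA =>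
      Finset.prod_nonneg fun i hi => hx i ((Finset.mem_powersetCard.mp hA).1 hi)
    have hs : 0 ≤ ∑ i ∈ S, x i := Finset.sum_nonneg hx
    have hnat : m.factorial * S.card.choose m ≤ S.card ^ m := by
      rw [← Nat.descFactorial_eq_factorial_mul_choose]
      exact Nat.descFactorial_le_pow _ _
    have h2 : (m.factorial : ℝ) * (S.card.choose m : ℝ) ≤ (S.card : ℝ)^m := by
      exact_mod_cast hnat
    have hcpos : (0:ℝ) < (S.card : ℝ) := by exact_mod_cast hpos
    have key : (S.card : ℝ)^m * ((m.factorial : ℝ) * ∑ A ∈ S.powersetCard m, ∏ i ∈ A, x i)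
        ≤ (S.card : ℝ)^m * (∑ i ∈ S, x i) ^ m := by
      calc (S.card : ℝ)^m * ((m.factorial : ℝ) * ∑ A ∈ S.powersetCard m, ∏ i ∈ A, x i)
          = (m.factorial : ℝ) * ((S.card : ℝ)^m * ∑ A ∈ S.powersetCard m, ∏ i ∈ A, x i) := by
            ring
        _ ≤ (m.factorial : ℝ) * ((S.card.choose m : ℝ) * (∑ i ∈ S, x i) ^ m) :=
            mul_le_mul_of_nonneg_left hM (by positivity)
        _ = ((m.factorial : ℝ) * (S.card.choose m : ℝ)) * (∑ i ∈ S, x i) ^ m := by ring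
        _ ≤ (S.card : ℝ)^m * (∑ i ∈ S, x i) ^ m :=
            mul_le_mul_of_nonneg_right h2 (by positivity)
    exact le_of_mul_le_mul_left key (pow_pos hcpos m)

lemma split_bound {n : ℕ} (x : Fin n → ℝ) (hx : ∀ i, 0 ≤ x i) (W : Finset (Fin n)) (r : ℕ) :
    ∑ A ∈ (Finset.univ : Finset (Fin n)).powersetCard r, ∏ i ∈ A, x i
      ≤ ∑ k ∈ Finset.range (r+1),
          (∑ B ∈ W.powersetCard k, ∏ i ∈ B, x i) *
          (∑ C ∈ Wᶜ.powersetCard (r-k), ∏ i ∈ C, x i) := by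
  have hmaps : ∀ A ∈ (Finset.univ : Finset (Fin n)).powersetCard r,
      (A ∩ W).card ∈ Finset.range (r+1) := by
    intro A hA
    have hAr : A.card = r := (Finset.mem_powersetCard.mp hA).2
    have : (A ∩ W).card ≤ A.card := Finset.card_le_card Finset.inter_subset_left
    rw [Finset.mem_range]
    omega
  rw [← Finset.sum_fiberwise_of_maps_to hmaps]
  apply Finset.sum_le_sum
  intro k hk
  have step1 : ∑ A ∈ (Finset.univ : Finset (Fin n)).powersetCard r
        |>.filter (fun A => (A ∩ W).card = k), ∏ i ∈ A, x i
      = ∑ A ∈ (Finset.univ : Finset (Fin n)).powersetCard r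
        |>.filter (fun A => (A ∩ W).card = k),
          ((∏ i ∈ A ∩ W, x i) * ∏ i ∈ A \ W, x i) := by
    exact Finset.sum_congr rfl fun A _ => (Finset.prod_inter_mul_prod_diff A W x).symm
  rw [step1, Finset.sum_mul_sum]
  rw [← Finset.sum_product']
  set T := ((W.powersetCard k) ×ˢ (Wᶜ.powersetCard (r-k))) with hT
  have himg : ∀ A ∈ (Finset.univ : Finset (Fin n)).powersetCard r
        |>.filter (fun A => (A ∩ W).card = k), (A ∩ W, A \ W) ∈ T := by
    intro A hA
    rw [Finset.mem_filter] at hA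
    obtain ⟨hA1, hA2⟩ := hA
    have hAr : A.card = r := (Finset.mem_powersetCard.mp hA1).2
    have hcards := Finset.card_inter_add_card_sdiff A W
    have hkr : k ≤ r := by have := Finset.mem_range.mp hk; omega
    have hBmem : A ∩ W ∈ W.powersetCard k :=
      Finset.mem_powersetCard.mpr ⟨Finset.inter_subset_right, hA2⟩
    have hCmem : A \ W ∈ Wᶜ.powersetCard (r - k) := by
      refine Finset.mem_powersetCard.mpr ⟨?_, by omega⟩
      intro i hi
      rw [Finset.mem_compl]
      exact (Finset.mem_sdiff.mp hi).2
    rw [hT, Finset.mem_product]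
    exact ⟨hBmem, hCmem⟩
  have hinj : ∀ A ∈ (Finset.univ : Finset (Fin n)).powersetCard r
        |>.filter (fun A => (A ∩ W).card = k),
      ∀ A' ∈ (Finset.univ : Finset (Fin n)).powersetCard r
        |>.filter (fun A => (A ∩ W).card = k),
      (A ∩ W, A \ W) = (A' ∩ W, A' \ W) → A = A' := by
    intro A _ A' _ h
    have h1 : A ∩ W = A' ∩ W := congrArg Prod.fst h
    have h2 : A \ W = A' \ W := congrArg Prod.snd h
    have e1 : (A ∩ W) ∪ (A \ W) = A := by
      ext i; simp only [Finset.mem_union, Finset.mem_inter, Finset.mem_sdiff]; tauto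
    have e2 : (A' ∩ W) ∪ (A' \ W) = A' := by
      ext i; simp only [Finset.mem_union, Finset.mem_inter, Finset.mem_sdiff]; tauto
    rw [← e1, ← e2, h1, h2]
  calc ∑ A ∈ (Finset.univ : Finset (Fin n)).powersetCard r
        |>.filter (fun A => (A ∩ W).card = k),
          ((∏ i ∈ A ∩ W, x i) * ∏ i ∈ A \ W, x i)
      = ∑ p ∈ ((Finset.univ : Finset (Fin n)).powersetCard r
          |>.filter (fun A => (A ∩ W).card = k)).image (fun A => (A ∩ W, A \ W)),
          ((∏ i ∈ p.1, x i) * ∏ i ∈ p.2, x i) :=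
        (Finset.sum_image (f := fun p => (∏ i ∈ p.1, x i) * ∏ i ∈ p.2, x i) hinj).symm
    _ ≤ ∑ p ∈ T, ((∏ i ∈ p.1, x i) * ∏ i ∈ p.2, x i) := by
        apply Finset.sum_le_sum_of_subset_of_nonneg
        · intro p hp
          obtain ⟨A, hA, rfl⟩ := Finset.mem_image.mp hp
          exact himg A hA
        · intro p _ _
          exact mul_nonneg (Finset.prod_nonneg fun i _ => hx i)
            (Finset.prod_nonneg fun i _ => hx i)

lemma final_ineq (r t : ℕ) (hr : 3 ≤ r) (ht2 : 2 ≤ t) (α2 αr : ℝ) (hα2 : 0 < α2) (hαr : 0 < αr)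
    (htt : αr ≤ α2 * ((t:ℝ) - 1) * ((r-2).factorial : ℝ))
    (s u : ℝ) (hs : 0 ≤ s) (hu : 0 ≤ u) (hsu : s + u = 1) :
    α2 * ((t.choose 2 : ℝ) * s^2 / (t:ℝ)^2)
      + αr * ∑ k ∈ Finset.range (r+1),
          (t.choose k : ℝ) * s^k / (t:ℝ)^k * (u^(r-k) / ((r-k).factorial : ℝ))
    ≤ α2 * ((t.choose 2 : ℝ) / (t:ℝ)^2) + αr * ((t.choose r : ℝ) / (t:ℝ)^r) := by
  have ht0 : (0:ℝ) < (t:ℝ) := by exact_mod_cast (by omega : 0 < t)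
  have hs1 : s ≤ 1 := by linarith
  set P : ℕ → ℝ := fun k => (t.choose k : ℝ) * (k.factorial : ℝ) / (t:ℝ)^k with hPdef
  have hPnonneg : ∀ k, 0 ≤ P k := by
    intro k
    show 0 ≤ (t.choose k : ℝ) * (k.factorial : ℝ) / (t:ℝ)^k
    positivity
  have hPle1 : ∀ k, P k ≤ 1 := by
    intro k
    show (t.choose k : ℝ) * (k.factorial : ℝ) / (t:ℝ)^k ≤ 1
    rw [div_le_one (by positivity)]
    have h := Nat.descFactorial_le_pow t k
    rw [Nat.descFactorial_eq_factorial_mul_choose] at h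
    calc (t.choose k : ℝ) * (k.factorial : ℝ)
        = ((k.factorial * t.choose k : ℕ) : ℝ) := by push_cast; ring
      _ ≤ ((t^k : ℕ) : ℝ) := by exact_mod_cast h
      _ = (t:ℝ)^k := by push_cast; ring
  have hPstep : ∀ k, (t:ℝ) * P (k+1) = P k * ((t - k : ℕ) : ℝ) := by
    intro k
    show (t:ℝ) * ((t.choose (k+1) : ℝ) * ((k+1).factorial : ℝ) / (t:ℝ)^(k+1))
        = (t.choose k : ℝ) * (k.factorial : ℝ) / (t:ℝ)^k * ((t - k : ℕ) : ℝ)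
    have hnat : (t.choose (k+1) : ℝ) * ((k:ℝ)+1) = (t.choose k : ℝ) * ((t - k : ℕ):ℝ) := by
      exact_mod_cast Nat.choose_succ_right_eq t k
    have hfact : ((k+1).factorial : ℝ) = ((k:ℝ)+1) * (k.factorial : ℝ) := by
      exact_mod_cast Nat.factorial_succ k
    have htk : (t:ℝ)^k ≠ 0 := by positivity
    have ht0' : (t:ℝ) ≠ 0 := ne_of_gt ht0
    rw [hfact, pow_succ]
    field_simp
    linear_combination hnat
  have hPdiff : ∀ k, (t:ℝ) * P k - (t:ℝ) * P (k+1) ≤ (k:ℝ) := by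
    intro k
    rw [hPstep k]
    have h1 : ((t - k : ℕ):ℝ) ≤ (t:ℝ) := by exact_mod_cast Nat.sub_le t k
    have h2 : (t:ℝ) ≤ ((t - k : ℕ):ℝ) + (k:ℝ) := by
      exact_mod_cast (by omega : t ≤ (t - k) + k)
    have h3 : (0:ℝ) ≤ (t:ℝ) - ((t - k : ℕ):ℝ) := by linarith
    have h4 := mul_le_mul_of_nonneg_right (hPle1 k) h3
    nlinarith [hPnonneg k]
  have hPbound : ∀ m, ∀ k, k ≤ m →
      (t:ℝ) * P k - (t:ℝ) * P m ≤ (m.choose 2 : ℝ) - (k.choose 2 : ℝ) := by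
    intro m
    induction m with
    | zero =>
      intro k hk
      have : k = 0 := by omega
      subst this; simp
    | succ m IH =>
      intro k hk
      rcases Nat.lt_or_ge k (m+1) with h | h
      · have hkm : k ≤ m := by omega
        have h1 := IH k hkm
        have h2 := hPdiff m
        have h3 : ((m+1).choose 2 : ℝ) = (m.choose 2 : ℝ) + (m:ℝ) := by
          have hcs : (m+1).choose 2 = m.choose 1 + m.choose 2 := Nat.choose_succ_succ m 1
          rw [hcs]
          push_cast [Nat.choose_one_right]
          ring
        linarith
      · have hkeq : k = m+1 := by omega
        subst hkeq; simp
  have hterm : ∀ k ∈ Finset.range (r+1),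
      (t.choose k : ℝ) * s^k / (t:ℝ)^k * (u^(r-k) / ((r-k).factorial : ℝ))
        = P k * ((r.choose k : ℝ) * s^k * u^(r-k)) / (r.factorial : ℝ) := by
    intro k hk
    have hkr : k ≤ r := by have := Finset.mem_range.mp hk; omega
    have hF : (r.factorial : ℝ) = (r.choose k : ℝ) * (k.factorial : ℝ) * ((r-k).factorial : ℝ) := by
      exact_mod_cast (Nat.choose_mul_factorial_mul_factorial hkr).symm
    show _ = (t.choose k : ℝ) * (k.factorial : ℝ) / (t:ℝ)^k
        * ((r.choose k : ℝ) * s^k * u^(r-k)) / (r.factorial : ℝ)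
    rw [hF]
    have hc : (0:ℝ) < (r.choose k : ℝ) := by exact_mod_cast Nat.choose_pos hkr
    have hkf : (0:ℝ) < (k.factorial : ℝ) := by exact_mod_cast Nat.factorial_pos k
    have hrkf : (0:ℝ) < ((r-k).factorial : ℝ) := by exact_mod_cast Nat.factorial_pos (r-k)
    have htk : (t:ℝ)^k ≠ 0 := by positivity
    field_simp
  rw [Finset.sum_congr rfl hterm]
  set X : ℕ → ℝ := fun k => (r.choose k : ℝ) * s^k * u^(r-k) with hXdef
  have hXnonneg : ∀ k, 0 ≤ X k := by
    intro k
    show 0 ≤ (r.choose k : ℝ) * s^k * u^(r-k)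
    positivity
  have S0 : ∑ k ∈ Finset.range (r+1), X k = 1 := by
    show ∑ k ∈ Finset.range (r+1), (r.choose k : ℝ) * s^k * u^(r-k) = 1
    calc ∑ k ∈ Finset.range (r+1), (r.choose k : ℝ) * s^k * u^(r-k)
        = ∑ k ∈ Finset.range (r+1), s^k * u^(r-k) * (r.choose k : ℝ) :=
          Finset.sum_congr rfl fun k _ => by ring
      _ = (s+u)^r := (add_pow s u r).symm
      _ = 1 := by rw [hsu]; exact one_pow r
  have S2 : ∑ k ∈ Finset.range (r+1), (k.choose 2 : ℝ) * X k = (r.choose 2 : ℝ) * s^2 := by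
    have hg0 : ((0:ℕ).choose 2 : ℝ) * X 0 = 0 := by norm_num
    have hg1 : ((1:ℕ).choose 2 : ℝ) * X 1 = 0 := by norm_num
    have hr1 : r = (r-1) + 1 := by omega
    have hr2 : r - 1 = (r-2) + 1 := by omega
    have e1 : ∑ k ∈ Finset.range (r+1), (k.choose 2 : ℝ) * X k
        = (∑ i ∈ Finset.range r, ((i+1).choose 2 : ℝ) * X (i+1)) + ((0:ℕ).choose 2 : ℝ) * X 0 :=
      Finset.sum_range_succ' _ r
    have e2 : ∑ i ∈ Finset.range r, ((i+1).choose 2 : ℝ) * X (i+1)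
        = (∑ i ∈ Finset.range (r-1), ((i+2).choose 2 : ℝ) * X (i+2)) + ((1:ℕ).choose 2 : ℝ) * X 1 := by
      rw [hr1]
      exact Finset.sum_range_succ' _ (r-1)
    have e3 : ∀ i ∈ Finset.range (r-1), ((i+2).choose 2 : ℝ) * X (i+2)
        = (r.choose 2 : ℝ) * s^2 * (((r-2).choose i : ℝ) * s^i * u^((r-2)-i)) := by
      intro i hi
      have hir : i + 2 ≤ r := by have := Finset.mem_range.mp hi; omega
      have hchoose : r.choose (i+2) * (i+2).choose 2 = r.choose 2 * (r-2).choose i := by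
        have := Nat.choose_mul (n := r) (k := i+2) (s := 2) (by omega)
        simpa using this
      have hcast : ((i+2).choose 2 : ℝ) * (r.choose (i+2) : ℝ)
          = (r.choose 2 : ℝ) * ((r-2).choose i : ℝ) := by
        exact_mod_cast by rw [mul_comm]; exact_mod_cast congrArg (Nat.cast (R := ℝ)) hchoose
      have hexp : r - (i+2) = (r-2) - i := by omega
      show ((i+2).choose 2 : ℝ) * ((r.choose (i+2) : ℝ) * s^(i+2) * u^(r-(i+2))) = _
      rw [hexp]
      calc ((i+2).choose 2 : ℝ) * ((r.choose (i+2) : ℝ) * s^(i+2) * u^((r-2)-i))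
          = (((i+2).choose 2 : ℝ) * (r.choose (i+2) : ℝ)) * s^(i+2) * u^((r-2)-i) := by ring
        _ = ((r.choose 2 : ℝ) * ((r-2).choose i : ℝ)) * s^(i+2) * u^((r-2)-i) := by rw [hcast]
        _ = (r.choose 2 : ℝ) * s^2 * (((r-2).choose i : ℝ) * s^i * u^((r-2)-i)) := by ring
    have e4 : ∑ i ∈ Finset.range (r-1), (((r-2).choose i : ℝ) * s^i * u^((r-2)-i)) = 1 := by
      have hrr : r - 1 = (r-2) + 1 := by omega
      rw [hrr]
      calc ∑ i ∈ Finset.range ((r-2)+1), (((r-2).choose i : ℝ) * s^i * u^((r-2)-i))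
          = ∑ i ∈ Finset.range ((r-2)+1), s^i * u^((r-2)-i) * ((r-2).choose i : ℝ) :=
            Finset.sum_congr rfl fun k _ => by ring
        _ = (s+u)^(r-2) := (add_pow s u (r-2)).symm
        _ = 1 := by rw [hsu]; exact one_pow _
    rw [e1, e2, Finset.sum_congr rfl e3, ← Finset.mul_sum, e4, hg0, hg1]
    ring
  have key1 : ∑ k ∈ Finset.range (r+1), P k * X k
      ≤ P r + (r.choose 2 : ℝ) * (1 - s^2) / (t:ℝ) := by
    have hb : ∀ k ∈ Finset.range (r+1), P k * X k
        ≤ (P r + ((r.choose 2 : ℝ) - (k.choose 2 : ℝ))/(t:ℝ)) * X k := by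
      intro k hk
      have hkr : k ≤ r := by have := Finset.mem_range.mp hk; omega
      have h := hPbound r k hkr
      have h2 : P k - P r ≤ ((r.choose 2 : ℝ) - (k.choose 2 : ℝ))/(t:ℝ) := by
        rw [le_div_iff₀ ht0]
        nlinarith [h]
      have hPk : P k ≤ P r + ((r.choose 2 : ℝ) - (k.choose 2 : ℝ))/(t:ℝ) := by linarith
      exact mul_le_mul_of_nonneg_right hPk (hXnonneg k)
    calc ∑ k ∈ Finset.range (r+1), P k * X k
        ≤ ∑ k ∈ Finset.range (r+1),
            (P r + ((r.choose 2 : ℝ) - (k.choose 2 : ℝ))/(t:ℝ)) * X k := Finset.sum_le_sum hb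
      _ = (P r + (r.choose 2 : ℝ)/(t:ℝ)) * (∑ k ∈ Finset.range (r+1), X k)
            - (1/(t:ℝ)) * (∑ k ∈ Finset.range (r+1), (k.choose 2 : ℝ) * X k) := by
          rw [Finset.mul_sum, Finset.mul_sum, ← Finset.sum_sub_distrib]
          exact Finset.sum_congr rfl fun k _ => by ring
      _ = P r + (r.choose 2 : ℝ) * (1 - s^2) / (t:ℝ) := by rw [S0, S2]; ring
  have hrf : (0:ℝ) < (r.factorial : ℝ) := by exact_mod_cast Nat.factorial_pos r
  have hPr : (t.choose r : ℝ)/(t:ℝ)^r = P r / (r.factorial : ℝ) := by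
    show _ = (t.choose r : ℝ) * (r.factorial : ℝ) / (t:ℝ)^r / (r.factorial : ℝ)
    have htr : (t:ℝ)^r ≠ 0 := by positivity
    field_simp
  have hQ2 : ((t.choose 2 : ℕ):ℝ) * 2 = (t:ℝ) * ((t:ℝ) - 1) := by
    have h1 : t.choose 2 * 2 * (t-2).factorial = t.factorial := by
      have h := Nat.choose_mul_factorial_mul_factorial ht2
      simpa [show (2:ℕ).factorial = 2 from rfl] using h
    have h2 : t.factorial = t * (t-1) * (t-2).factorial := by
      obtain ⟨t', rfl⟩ : ∃ t', t = t' + 2 := ⟨t - 2, by omega⟩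
      simp [Nat.factorial_succ]
      ring
    have h3 : t.choose 2 * 2 = t * (t-1) :=
      Nat.eq_of_mul_eq_mul_right (Nat.factorial_pos _) (by rw [h1, h2])
    calc ((t.choose 2 : ℕ):ℝ) * 2 = ((t.choose 2 * 2 : ℕ):ℝ) := by push_cast; ring
      _ = ((t*(t-1) : ℕ):ℝ) := by rw [h3]
      _ = (t:ℝ) * ((t:ℝ) - 1) := by
          push_cast [Nat.cast_sub (show 1 ≤ t by omega)]
          ring
  have hR2 : ((r.choose 2 : ℕ):ℝ) * 2 * ((r-2).factorial : ℝ) = (r.factorial : ℝ) := by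
    have h := Nat.choose_mul_factorial_mul_factorial (show 2 ≤ r by omega)
    have h' : r.choose 2 * 2 * (r-2).factorial = r.factorial := by
      simpa [show (2:ℕ).factorial = 2 from rfl] using h
    exact_mod_cast h'
  have hR2pos : (0:ℝ) < (r.choose 2 : ℝ) := by
    exact_mod_cast Nat.choose_pos (show 2 ≤ r by omega)
  have hF2pos : (0:ℝ) < ((r-2).factorial : ℝ) := by exact_mod_cast Nat.factorial_pos (r-2)
  have hcore : αr * (r.choose 2 : ℝ)/((t:ℝ) * (r.factorial : ℝ)) ≤ α2 * (t.choose 2 : ℝ)/(t:ℝ)^2 := by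
    rw [div_le_div_iff₀ (by positivity) (by positivity)]
    rw [← hR2]
    have hmul := mul_le_mul_of_nonneg_right htt
      (le_of_lt (by positivity : (0:ℝ) < (r.choose 2 : ℝ) * (t:ℝ)^2))
    calc αr * (r.choose 2 : ℝ) * (t:ℝ)^2
        = αr * ((r.choose 2 : ℝ) * (t:ℝ)^2) := by ring
      _ ≤ α2 * ((t:ℝ) - 1) * ((r-2).factorial : ℝ) * ((r.choose 2 : ℝ) * (t:ℝ)^2) := hmul
      _ = α2 * (t.choose 2 : ℝ) * ((t:ℝ) * ((r.choose 2 : ℝ) * 2 * ((r-2).factorial : ℝ))) := by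
          linear_combination (-(α2 * ((r-2).factorial : ℝ) * (r.choose 2 : ℝ) * (t:ℝ))) * hQ2
  rw [← Finset.sum_div]
  have h4 : αr * ((∑ k ∈ Finset.range (r+1), P k * X k) / (r.factorial : ℝ))
      ≤ αr * ((P r + (r.choose 2 : ℝ) * (1 - s^2) / (t:ℝ)) / (r.factorial : ℝ)) := by
    apply mul_le_mul_of_nonneg_left _ (le_of_lt hαr)
    gcongr
  have h5 : αr * ((P r + (r.choose 2 : ℝ) * (1 - s^2) / (t:ℝ)) / (r.factorial : ℝ))
      = αr * ((t.choose r : ℝ)/(t:ℝ)^r)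
        + (1 - s^2) * (αr * (r.choose 2 : ℝ)/((t:ℝ) * (r.factorial : ℝ))) := by
    rw [hPr]
    ring
  have h6 : (1 - s^2) * (αr * (r.choose 2 : ℝ)/((t:ℝ) * (r.factorial : ℝ)))
      ≤ (1 - s^2) * (α2 * (t.choose 2 : ℝ)/(t:ℝ)^2) := by
    apply mul_le_mul_of_nonneg_left hcore
    nlinarith
  have h7 : α2 * ((t.choose 2 : ℝ) * s^2 / (t:ℝ)^2) + (1 - s^2) * (α2 * (t.choose 2 : ℝ)/(t:ℝ)^2)
      = α2 * ((t.choose 2 : ℝ) / (t:ℝ)^2) := by ring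
  linarith [h4, h5, h6, h7]

lemma choose_two_cast (t : ℕ) (ht2 : 2 ≤ t) :
    ((t.choose 2 : ℕ):ℝ) * 2 = (t:ℝ) * ((t:ℝ) - 1) := by
  have h1 : t.choose 2 * 2 * (t-2).factorial = t.factorial := by
    have h := Nat.choose_mul_factorial_mul_factorial ht2
    simpa [show (2:ℕ).factorial = 2 from rfl] using h
  have h2 : t.factorial = t * (t-1) * (t-2).factorial := by
    obtain ⟨t', rfl⟩ : ∃ t', t = t' + 2 := ⟨t - 2, by omega⟩
    simp [Nat.factorial_succ]
    ring
  have h3 : t.choose 2 * 2 = t * (t-1) :=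
    Nat.eq_of_mul_eq_mul_right (Nat.factorial_pos _) (by rw [h1, h2])
  calc ((t.choose 2 : ℕ):ℝ) * 2 = ((t.choose 2 * 2 : ℕ):ℝ) := by push_cast; ring
    _ = ((t*(t-1) : ℕ):ℝ) := by rw [h3]
    _ = (t:ℝ) * ((t:ℝ) - 1) := by
        push_cast [Nat.cast_sub (show 1 ≤ t by omega)]
        ring

lemma target_eq (r t : ℕ) (hr : 3 ≤ r) (ht2 : 2 ≤ t) :
    (∏ i ∈ Finset.Icc 1 (r-1), ((t:ℝ) - (i:ℕ))) / ((r.factorial : ℝ) * (t:ℝ)^(r-1))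
      = (t.choose r : ℝ) / (t:ℝ)^r := by
  have ht0 : (0:ℝ) < (t:ℝ) := by exact_mod_cast (by omega : 0 < t)
  have hA : (t:ℝ) * ∏ i ∈ Finset.Icc 1 (r-1), ((t:ℝ) - (i:ℕ))
      = (t.descFactorial r : ℝ) := by
    have hIcc : Finset.Icc 1 (r-1) = Finset.Ico 1 r := by
      rw [← Finset.Ico_add_one_right_eq_Icc]
      congr 1
      omega
    rw [hIcc, Finset.prod_Ico_eq_prod_range]
    rcases Nat.lt_or_ge t r with hlt | hge
    · -- t < r : both sides zero
      have hz : ∏ i ∈ Finset.range (r - 1), ((t:ℝ) - ((1 + i : ℕ):ℕ)) = 0 := by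
        apply Finset.prod_eq_zero (i := t - 1)
        · rw [Finset.mem_range]; omega
        · have : (1 + (t - 1) : ℕ) = t := by omega
          rw [this]; ring
      rw [hz, Nat.descFactorial_eq_zero_iff_lt.mpr hlt]
      simp
    · have hcast : (t.descFactorial r : ℝ) = ∏ i ∈ Finset.range r, ((t:ℝ) - (i:ℕ)) := by
        rw [Nat.descFactorial_eq_prod_range]
        push_cast
        apply Finset.prod_congr rfl
        intro i hi
        have : i ≤ t := by have := Finset.mem_range.mp hi; omega
        rw [Nat.cast_sub this]
      rw [hcast]
      have hr1 : r = (r - 1) + 1 := by omega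
      rw [hr1, Finset.prod_range_succ']
      simp only [Nat.cast_zero, sub_zero]
      rw [mul_comm]
      congr 1
      apply Finset.prod_congr rfl
      intro i _
      congr 2
      omega
  have hdf : (t.descFactorial r : ℝ) = (r.factorial : ℝ) * (t.choose r : ℝ) := by
    exact_mod_cast Nat.descFactorial_eq_factorial_mul_choose t r
  rw [div_eq_div_iff (by positivity) (by positivity)]
  have hpow : (t:ℝ)^r = (t:ℝ) * (t:ℝ)^(r-1) := by
    conv_lhs => rw [show r = (r-1)+1 by omega]
    rw [pow_succ]
    ring
  rw [hpow]
  calc (∏ i ∈ Finset.Icc 1 (r-1), ((t:ℝ) - (i:ℕ))) * ((t:ℝ) * (t:ℝ)^(r-1))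
      = ((t:ℝ) * ∏ i ∈ Finset.Icc 1 (r-1), ((t:ℝ) - (i:ℕ))) * (t:ℝ)^(r-1) := by ring
    _ = (t.descFactorial r : ℝ) * (t:ℝ)^(r-1) := by rw [hA]
    _ = ((r.factorial : ℝ) * (t.choose r : ℝ)) * (t:ℝ)^(r-1) := by rw [hdf]
    _ = (t.choose r : ℝ) * ((r.factorial : ℝ) * (t:ℝ)^(r-1)) := by ring


def stdSimplex' (n : ℕ) : Set (Fin n → ℝ) :=
  {x | (∀ i, 0 ≤ x i) ∧ ∑ i, x i = 1}

/-- Theorem (b): a `{1,2,r}`-graph whose maximum complete `{1,2,r}`-subgraph and whose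
set of vertices covered by the 2-edges both have order `t ≥ α_r/(α_2 (r-2)!) + 1`. -/
theorem stmt_8 (n r t : ℕ) (hr : 3 ≤ r) (α2 αr : ℝ) (hα2 : 0 < α2) (hαr : 0 < αr)
    (E1 : Finset (Fin n)) (E2 Er : Finset (Finset (Fin n)))
    (hE2 : ∀ e ∈ E2, e.card = 2) (hEr : ∀ e ∈ Er, e.card = r)
    (hcl : ∃ W : Finset (Fin n), W.card = t ∧ W ⊆ E1 ∧
      W.powersetCard 2 ⊆ E2 ∧ W.powersetCard r ⊆ Er)
    (hmax : ∀ W : Finset (Fin n), W ⊆ E1 → W.powersetCard 2 ⊆ E2 →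
      W.powersetCard r ⊆ Er → W.card ≤ t)
    (hcover : (E2.biUnion id).card = t)
    (ht : (t : ℝ) ≥ αr / (α2 * Nat.factorial (r - 2)) + 1) :
    IsGreatest {y : ℝ | ∃ x ∈ stdSimplex' n,
        y = (∑ i ∈ E1, x i) + α2 * (∑ e ∈ E2, ∏ i ∈ e, x i)
          + αr * ∑ e ∈ Er, ∏ i ∈ e, x i}
      (1 + α2 * (((t : ℝ) - 1) / (2 * t))
        + αr * (∏ i ∈ Finset.Icc 1 (r - 1), ((t : ℝ) - i)) / (Nat.factorial r * (t : ℝ) ^ (r - 1))) := by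
  obtain ⟨W, hWcard, hWE1, hW2, hWr⟩ := hcl
  have hrf2 : (0:ℝ) < ((r-2).factorial : ℝ) := by exact_mod_cast Nat.factorial_pos (r-2)
  have htR : (1:ℝ) < (t:ℝ) := by
    have hpos : 0 < αr / (α2 * ((r-2).factorial : ℝ)) := by positivity
    linarith [ht]
  have ht2 : 2 ≤ t := by
    have : 1 < t := by exact_mod_cast htR
    omega
  have ht0 : (0:ℝ) < (t:ℝ) := by linarith
  have htt : αr ≤ α2 * ((t:ℝ) - 1) * ((r-2).factorial : ℝ) := by
    have h2 : αr / (α2 * ((r-2).factorial : ℝ)) ≤ (t:ℝ) - 1 := by linarith [ht]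
    rw [div_le_iff₀ (by positivity)] at h2
    nlinarith [h2]
  -- E2 is exactly the set of pairs of W
  have hWsub : W ⊆ E2.biUnion id := by
    intro i hi
    obtain ⟨j, hj, hne⟩ := Finset.exists_mem_ne (by omega : 1 < W.card) i
    have hpair : ({i, j} : Finset (Fin n)) ∈ W.powersetCard 2 := by
      rw [Finset.mem_powersetCard]
      constructor
      · intro z hz
        rcases Finset.mem_insert.mp hz with rfl | hz
        · exact hi
        · rw [Finset.mem_singleton.mp hz]; exact hj
      · rw [Finset.card_insert_of_notMem (by simp [Ne.symm hne]), Finset.card_singleton]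
    exact Finset.mem_biUnion.mpr ⟨{i, j}, hW2 hpair, by simp⟩
  have hWeq : W = E2.biUnion id :=
    Finset.eq_of_subset_of_card_le hWsub (by rw [hcover, hWcard])
  have hE2eq : E2 = W.powersetCard 2 := by
    apply Finset.Subset.antisymm _ hW2
    intro e he
    rw [Finset.mem_powersetCard]
    refine ⟨?_, hE2 e he⟩
    intro i hi
    rw [hWeq]
    exact Finset.mem_biUnion.mpr ⟨e, he, hi⟩
  have hQ2 := choose_two_cast t ht2
  have hval2 : ((t:ℝ) - 1) / (2 * (t:ℝ)) = (t.choose 2 : ℝ) / (t:ℝ)^2 := by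
    rw [div_eq_div_iff (by positivity) (by positivity)]
    linear_combination (-(t:ℝ)) * hQ2
  have hvalr : αr * (∏ i ∈ Finset.Icc 1 (r - 1), ((t : ℝ) - i)) / ((r.factorial : ℝ) * (t : ℝ) ^ (r - 1))
      = αr * ((t.choose r : ℝ) / (t:ℝ)^r) := by
    rw [mul_div_assoc, target_eq r t hr ht2]
  constructor
  · -- the value is attained at the uniform distribution on W
    refine ⟨fun i => if i ∈ W then 1/(t:ℝ) else 0, ⟨?_, ?_⟩, ?_⟩
    · intro i
      dsimp only
      split <;> positivity
    · rw [Finset.sum_ite_mem, Finset.univ_inter, Finset.sum_const, hWcard, nsmul_eq_mul]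
      field_simp
    · have hsum1 : ∑ i ∈ E1, (if i ∈ W then 1/(t:ℝ) else 0) = 1 := by
        rw [Finset.sum_ite_mem, Finset.inter_eq_right.mpr hWE1, Finset.sum_const, hWcard,
          nsmul_eq_mul]
        field_simp
      have hsum2 : ∑ e ∈ E2, ∏ i ∈ e, (if i ∈ W then 1/(t:ℝ) else 0)
          = (t.choose 2 : ℝ) / (t:ℝ)^2 := by
        rw [hE2eq]
        have hterm : ∀ e ∈ W.powersetCard 2,
            ∏ i ∈ e, (if i ∈ W then 1/(t:ℝ) else 0) = (1/(t:ℝ))^2 := by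
          intro e he
          obtain ⟨hsub, hcard⟩ := Finset.mem_powersetCard.mp he
          calc ∏ i ∈ e, (if i ∈ W then 1/(t:ℝ) else 0)
              = ∏ _i ∈ e, (1/(t:ℝ)) :=
                Finset.prod_congr rfl fun i hi => if_pos (hsub hi)
            _ = (1/(t:ℝ))^e.card := by rw [Finset.prod_const]
            _ = (1/(t:ℝ))^2 := by rw [hcard]
        rw [Finset.sum_congr rfl hterm, Finset.sum_const, Finset.card_powersetCard, hWcard,
          nsmul_eq_mul]
        rw [div_pow, one_pow]
        ring
      have hsum3 : ∑ e ∈ Er, ∏ i ∈ e, (if i ∈ W then 1/(t:ℝ) else 0)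
          = (t.choose r : ℝ) / (t:ℝ)^r := by
        have hterm : ∀ e ∈ Er, ∏ i ∈ e, (if i ∈ W then 1/(t:ℝ) else 0)
            = if e ⊆ W then (1/(t:ℝ))^r else 0 := by
          intro e he
          by_cases hsub : e ⊆ W
          · rw [if_pos hsub]
            calc ∏ i ∈ e, (if i ∈ W then 1/(t:ℝ) else 0)
                = ∏ _i ∈ e, (1/(t:ℝ)) :=
                  Finset.prod_congr rfl fun i hi => if_pos (hsub hi)
              _ = (1/(t:ℝ))^e.card := by rw [Finset.prod_const]
              _ = (1/(t:ℝ))^r := by rw [hEr e he]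
          · rw [if_neg hsub]
            obtain ⟨i, hie, hiW⟩ := Finset.not_subset.mp hsub
            exact Finset.prod_eq_zero hie (if_neg hiW)
        rw [Finset.sum_congr rfl hterm, Finset.sum_ite, Finset.sum_const_zero, add_zero,
          Finset.sum_const]
        have hfilter : Er.filter (fun e => e ⊆ W) = W.powersetCard r := by
          ext e
          simp only [Finset.mem_filter, Finset.mem_powersetCard]
          constructor
          · rintro ⟨he, hsub⟩
            exact ⟨hsub, hEr e he⟩
          · rintro ⟨hsub, hcard⟩
            exact ⟨hWr (Finset.mem_powersetCard.mpr ⟨hsub, hcard⟩), hsub⟩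
        rw [hfilter, Finset.card_powersetCard, hWcard, nsmul_eq_mul]
        rw [div_pow, one_pow]
        ring
      rw [hsum1, hsum2, hsum3, hvalr]
      rw [hval2]
  · -- upper bound
    rintro y ⟨x, ⟨hx0, hx1⟩, rfl⟩
    set s := ∑ i ∈ W, x i with hsdef
    set u := ∑ i ∈ Wᶜ, x i with hudef
    have hsu : s + u = 1 := by rw [hsdef, hudef, Finset.sum_add_sum_compl, hx1]
    have hs : 0 ≤ s := Finset.sum_nonneg fun i _ => hx0 i
    have hu : 0 ≤ u := Finset.sum_nonneg fun i _ => hx0 i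
    have B1 : ∑ i ∈ E1, x i ≤ 1 := by
      calc ∑ i ∈ E1, x i ≤ ∑ i, x i :=
            Finset.sum_le_sum_of_subset_of_nonneg (Finset.subset_univ E1) fun i _ _ => hx0 i
        _ = 1 := hx1
    have B2 : ∑ e ∈ E2, ∏ i ∈ e, x i ≤ (t.choose 2 : ℝ) * s^2 / (t:ℝ)^2 := by
      rw [hE2eq]
      have hM := maclaurin x W (fun i _ => hx0 i) 2
      rw [hWcard] at hM
      rw [le_div_iff₀ (by positivity)]
      linarith [hM]
    have B3 : ∑ e ∈ Er, ∏ i ∈ e, x i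
        ≤ ∑ k ∈ Finset.range (r+1),
            (t.choose k : ℝ) * s^k / (t:ℝ)^k * (u^(r-k) / ((r-k).factorial : ℝ)) := by
      have step1 : ∑ e ∈ Er, ∏ i ∈ e, x i
          ≤ ∑ A ∈ (Finset.univ : Finset (Fin n)).powersetCard r, ∏ i ∈ A, x i := by
        apply Finset.sum_le_sum_of_subset_of_nonneg
        · intro e he
          exact Finset.mem_powersetCard.mpr ⟨Finset.subset_univ e, hEr e he⟩
        · intro e _ _
          exact Finset.prod_nonneg fun i _ => hx0 i
      have step2 := split_bound x hx0 W r
      have step3 : ∀ k ∈ Finset.range (r+1),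
          (∑ B ∈ W.powersetCard k, ∏ i ∈ B, x i) *
            (∑ C ∈ Wᶜ.powersetCard (r-k), ∏ i ∈ C, x i)
          ≤ (t.choose k : ℝ) * s^k / (t:ℝ)^k * (u^(r-k) / ((r-k).factorial : ℝ)) := by
        intro k _
        have hA : ∑ B ∈ W.powersetCard k, ∏ i ∈ B, x i ≤ (t.choose k : ℝ) * s^k / (t:ℝ)^k := by
          have hM := maclaurin x W (fun i _ => hx0 i) k
          rw [hWcard] at hM
          rw [le_div_iff₀ (by positivity)]
          linarith [hM]
        have hB : ∑ C ∈ Wᶜ.powersetCard (r-k), ∏ i ∈ C, x i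
            ≤ u^(r-k) / ((r-k).factorial : ℝ) := by
          have hL := esymm_le x Wᶜ (fun i _ => hx0 i) (r-k)
          have hfp : (0:ℝ) < ((r-k).factorial : ℝ) := by
            exact_mod_cast Nat.factorial_pos (r-k)
          rw [le_div_iff₀ hfp]
          linarith [hL]
        have hBnonneg : 0 ≤ ∑ C ∈ Wᶜ.powersetCard (r-k), ∏ i ∈ C, x i :=
          Finset.sum_nonneg fun C _ => Finset.prod_nonneg fun i _ => hx0 i
        exact mul_le_mul hA hB hBnonneg (by positivity)
      calc ∑ e ∈ Er, ∏ i ∈ e, x i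
          ≤ ∑ A ∈ (Finset.univ : Finset (Fin n)).powersetCard r, ∏ i ∈ A, x i := step1
        _ ≤ ∑ k ∈ Finset.range (r+1),
              (∑ B ∈ W.powersetCard k, ∏ i ∈ B, x i) *
              (∑ C ∈ Wᶜ.powersetCard (r-k), ∏ i ∈ C, x i) := step2
        _ ≤ _ := Finset.sum_le_sum step3
    have hfi := final_ineq r t hr ht2 α2 αr hα2 hαr htt s u hs hu hsu
    have hB2' := mul_le_mul_of_nonneg_left B2 (le_of_lt hα2)
    have hB3' := mul_le_mul_of_nonneg_left B3 (le_of_lt hαr)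
    have e2' : α2 * (((t:ℝ) - 1) / (2 * (t:ℝ))) = α2 * ((t.choose 2 : ℝ) / (t:ℝ)^2) := by
      rw [hval2]
    linarith [B1, hB2', hB3', hfi, hvalr, e2']
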